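/- arXiv:2403.00598 — 5 statements merged into one kernel-verified Lean document; each statement's English description precedes it below -/
import Mathlib

section
/- In every capacitated house allocation instance there exists a Pareto-optimal matching whose cardinality equals the maximum cardinality of a matching of the instance. -/
noncomputable section

open Finset

attribute [local instance] Classical.propDecidable

/-- `Better l x y` means the (optional) house `x` is strictly preferred to the (optional)
house `y` according to the strict preference list `l` (earlier in the list = more
preferred); being matched to any acceptable house is preferred to being unmatched. -/
def Better {H : Type*} (l : List H) : Option H → Option H → Prop
  | some h, some h' => h ∈ l ∧ l.idxOf h < l.idxOf h'
  | some h, none => h ∈ l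
  | none, _ => False

/-- A capacitated house allocation instance: each applicant `a` has a strict preference
list `pref a` over her acceptable houses (most preferred first, acceptable = on the list),
and each house `h` has a capacity `cap h`. -/
structure HA (A H : Type*) where
  pref : A → List H
  cap : H → ℕ

namespace HA

variable {A H : Type*} [Fintype A]

/-- A matching assigns to each applicant at most one acceptable house,
respecting the houses' capacities. -/
def IsMatching (I : HA A H) (M : A → Option H) : Prop :=
  (∀ a h, M a = some h → h ∈ I.pref a) ∧
  ∀ h, (univ.filter fun a => M a = some h).card ≤ I.cap h

/-- A matching is perfect if every applicant is matched. -/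
def Perfect (M : A → Option H) : Prop := ∀ a, (M a).isSome

/-- `M'` dominates `M` if strictly more applicants prefer `M'` to `M` than
prefer `M` to `M'`. -/
def Dominates (I : HA A H) (M' M : A → Option H) : Prop :=
  (univ.filter fun a => Better (I.pref a) (M a) (M' a)).card <
    (univ.filter fun a => Better (I.pref a) (M' a) (M a)).card

/-- A matching is popular if no matching dominates it. -/
def Popular (I : HA A H) (M : A → Option H) : Prop :=
  I.IsMatching M ∧ ∀ M', I.IsMatching M' → ¬ I.Dominates M' M

/-- `M'` Pareto-dominates `M` if every applicant is at least as well off in `M'`,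
and some applicant is strictly better off. -/
def ParetoDominates (I : HA A H) (M' M : A → Option H) : Prop :=
  (∀ a, M' a = M a ∨ Better (I.pref a) (M' a) (M a)) ∧
  ∃ a, Better (I.pref a) (M' a) (M a)

/-- A matching is Pareto-optimal if no matching Pareto-dominates it. -/
def ParetoOptimal (I : HA A H) (M : A → Option H) : Prop :=
  I.IsMatching M ∧ ∀ M', I.IsMatching M' → ¬ I.ParetoDominates M' M

/-- The cardinality of a matching: the number of matched applicants. -/
def size (M : A → Option H) : ℕ := (univ.filter fun a => (M a).isSome).card

/-- `f(a)`: the most preferred acceptable house of `a` (if any). -/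
def fOpt (I : HA A H) (a : A) : Option H := (I.pref a).head?

/-- The admirers of a house `h`: the applicants whose most preferred house is `h`. -/
def admirers (I : HA A H) (h : H) : Finset A := univ.filter fun a => I.fOpt a = some h

/-- `s(a)`: equals `f(a)` if `f(a)` has at most `cap (f a)` admirers; otherwise the
most preferred acceptable house of `a` having strictly fewer admirers than its
capacity; `none` if no such house exists. -/
def sOpt (I : HA A H) (a : A) : Option H :=
  match (I.pref a).head? with
  | none => none
  | some h =>
    if (I.admirers h).card ≤ I.cap h then some h
    else (I.pref a).find? fun h' => decide ((I.admirers h').card < I.cap h')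

/-- `(a, h)` is an edge of the first/second-choice multigraph `G'`. -/
def InG' (I : HA A H) (a : A) (h : H) : Prop := I.fOpt a = some h ∨ I.sOpt a = some h

/-- The set of applicants matched to house `h` in `M`. -/
def matchedTo (M : A → Option H) (h : H) : Finset A := univ.filter fun a => M a = some h

/-- An admissible matching: every edge lies in `G'`; every house having at least as many
admirers as its capacity is saturated by admirers only; and every house having at most
as many admirers as its capacity has all its admirers matched to it. -/
def Admissible (I : HA A H) (M : A → Option H) : Prop :=
  I.IsMatching M ∧
  (∀ a h, M a = some h → I.InG' a h) ∧
  (∀ h, I.cap h ≤ (I.admirers h).card →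
      (matchedTo M h).card = I.cap h ∧ ∀ a ∈ matchedTo M h, I.fOpt a = some h) ∧
  (∀ h, (I.admirers h).card ≤ I.cap h → ∀ a ∈ I.admirers h, M a = some h)

end HA


/-- Rank of an optional house in a preference list: position in the list, with
`none` (and absent houses) ranked as the list length. -/
def rk {H : Type*} (l : List H) : Option H → ℕ
  | some h => l.idxOf h
  | none => l.length

lemma rk_lt_of_better {H : Type*} {l : List H} {x y : Option H} (h : Better l x y) :
    rk l x < rk l y := by
  cases x with
  | none => exact absurd h (by simp [Better])
  | some hx =>
    cases y with
    | none =>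
      have : hx ∈ l := h
      simpa [rk] using List.idxOf_lt_length_iff.mpr this
    | some hy => exact h.2

lemma isSome_of_better_or_eq {H : Type*} {l : List H} {x y : Option H}
    (h : x = y ∨ Better l x y) (hy : y.isSome) : x.isSome := by
  rcases h with h | h
  · rw [h]; exact hy
  · cases x with
    | none => exact absurd h (by simp [Better])
    | some hx => rfl

/-- In every capacitated house allocation instance there exists a
Pareto-optimal matching whose cardinality equals the maximum cardinality of a matching. -/
theorem exists_paretoOptimal_of_max_size {A H : Type*} [Fintype A] (I : HA A H) :
    ∃ M, I.IsMatching M ∧ I.ParetoOptimal M ∧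
      ∀ M', I.IsMatching M' → HA.size M' ≤ HA.size M := by
  classical
  have hM0 : I.IsMatching (fun _ => (none : Option H)) := by
    constructor
    · intro a h hh; simp at hh
    · intro h; simp
  have hP0 : ∃ M, I.IsMatching M ∧ HA.size M = 0 :=
    ⟨fun _ => none, hM0, by simp [HA.size]⟩
  have hbound : ∀ M : A → Option H, HA.size M ≤ Fintype.card A := by
    intro M
    simpa [HA.size] using Finset.card_filter_le (univ : Finset A)
      (fun a => (M a).isSome)
  set P : ℕ → Prop := fun n => ∃ M, I.IsMatching M ∧ HA.size M = n with hPdef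
  set N := Nat.findGreatest P (Fintype.card A) with hN
  have hPN : P N := Nat.findGreatest_spec (Nat.zero_le _) hP0
  have hle : ∀ M', I.IsMatching M' → HA.size M' ≤ N := by
    intro M' hM'
    exact Nat.le_findGreatest (hbound M') ⟨M', hM', rfl⟩
  set Φ : (A → Option H) → ℕ := fun M => ∑ a, rk (I.pref a) (M a) with hΦdef
  have hex : ∃ k, ∃ M, I.IsMatching M ∧ HA.size M = N ∧ Φ M = k := by
    obtain ⟨M, hM, hs⟩ := hPN
    exact ⟨Φ M, M, hM, hs, rfl⟩
  obtain ⟨M, hM, hsize, hΦM⟩ := Nat.find_spec hex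
  refine ⟨M, hM, ⟨hM, ?_⟩, fun M' h' => (hle M' h').trans_eq hsize.symm⟩
  rintro M' hM' ⟨hall, a0, ha0⟩
  have hsub : ∀ a, (M a).isSome → (M' a).isSome := fun a ha =>
    isSome_of_better_or_eq (hall a) ha
  have hsz : HA.size M ≤ HA.size M' := by
    apply Finset.card_le_card
    intro a ha
    simp only [Finset.mem_filter, Finset.mem_univ, true_and] at ha ⊢
    exact hsub a ha
  have hs' : HA.size M' = N := le_antisymm (hle M' hM') (hsize ▸ hsz)
  have hΦlt : Φ M' < Φ M := by
    apply Finset.sum_lt_sum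
    · intro a _
      rcases hall a with h | h
      · rw [h]
      · exact le_of_lt (rk_lt_of_better h)
    · exact ⟨a0, Finset.mem_univ _, rk_lt_of_better ha0⟩
  have hmin := Nat.find_min' hex ⟨M', hM', hs', rfl⟩
  omega
end
end

section
/- Let I = (A, H, (≻_a), q) be a capacitated house allocation instance with n = |A| applicants in which every applicant has at least one acceptable house, and let x be the maximum cardinality of a matching of I. Then: (i) there exists a capacity increase vector r ≥ 0 with |r|_1 = n − x such that the instance with capacities q + r admits a matching that is both perfect and Pareto-optimal; and (ii) for every capacity change vector r with |r|_1 < n − x, the instance with capacities q + r admits no perfect matching (hence no perfect Pareto-optimal matching). -/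
noncomputable section

open Finset

attribute [local instance] Classical.propDecidable

namespace HA

variable {A H : Type*} [Fintype A] [Fintype H]

def fib (N : A → H) (h : H) : Finset A := univ.filter fun a => N a = h

lemma mem_fib {N : A → H} {a : A} {h : H} : a ∈ fib N h ↔ N a = h := by
  simp [fib]

lemma sum_fib (N : A → H) : ∑ h, (fib N h).card = Fintype.card A := by
  rw [← card_univ]
  exact (card_eq_sum_card_fiberwise (fun a _ => mem_univ (N a))).symm

def deff (I : HA A H) (N : A → H) : ℕ := ∑ h, ((fib N h).card - I.cap h)

lemma key (I : HA A H) (N : A → H) (hN : ∀ a, N a ∈ I.pref a)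
    (M₀ : A → Option H) (hmax : ∀ M', I.IsMatching M' → HA.size M' ≤ HA.size M₀) :
    Fintype.card A ≤ HA.size M₀ + I.deff N := by
  have hS : ∀ h : H, ∃ S : Finset A, S ⊆ fib N h ∧ S.card = min (fib N h).card (I.cap h) :=
    fun h => Finset.exists_subset_card_eq (min_le_left _ _)
  choose S hSsub hScard using hS
  set M' : A → Option H := fun a => if a ∈ S (N a) then some (N a) else none with hM'def
  have hfib : ∀ {a h}, a ∈ S h → N a = h := fun {a h} ha => mem_fib.mp (hSsub h ha)
  have hfil : ∀ h, (univ.filter fun a => M' a = some h) = S h := by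
    intro h
    ext a
    simp only [mem_filter, mem_univ, true_and, hM'def]
    constructor
    · intro ha
      by_cases hc : a ∈ S (N a)
      · rw [if_pos hc] at ha
        injection ha with hh
        exact hh ▸ hc
      · rw [if_neg hc] at ha; exact absurd ha (by simp)
    · intro ha
      have hfa : N a = h := hfib ha
      subst hfa
      rw [if_pos ha]
  have hmatch : I.IsMatching M' := by
    constructor
    · intro a h hah
      by_cases hc : a ∈ S (N a)
      · simp only [hM'def, if_pos hc] at hah
        injection hah with hh; rw [← hh]; exact hN a
      · simp [hM'def, if_neg hc] at hah
    · intro h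
      rw [hfil h, hScard h]
      exact (min_le_right _ _).trans (le_refl _)
  have hsize : HA.size M' = ∑ h, min (fib N h).card (I.cap h) := by
    have h1 : (univ.filter fun a => (M' a).isSome) = univ.filter fun a => a ∈ S (N a) := by
      ext a
      simp only [mem_filter, mem_univ, true_and, hM'def]
      by_cases hc : a ∈ S (N a) <;> simp [hc]
    have h2 : (univ.filter fun a => a ∈ S (N a)).card
        = ∑ h, (((univ.filter fun a => a ∈ S (N a))).filter fun a => N a = h).card :=
      card_eq_sum_card_fiberwise (fun a _ => mem_univ (N a))
    have h3 : ∀ h, (((univ.filter fun a => a ∈ S (N a))).filter fun a => N a = h) = S h := by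
      intro h
      ext a
      simp only [mem_filter, mem_univ, true_and]
      constructor
      · rintro ⟨ha, rfl⟩; exact ha
      · intro ha
        have := hfib ha
        subst this
        exact ⟨ha, rfl⟩
    rw [HA.size, h1, h2]
    exact Finset.sum_congr rfl fun h _ => by rw [h3 h, hScard h]
  have htot : HA.size M' + I.deff N = Fintype.card A := by
    rw [hsize, HA.deff, ← Finset.sum_add_distrib, ← sum_fib N]
    exact Finset.sum_congr rfl fun h _ => by omega
  have := hmax M' hmatch
  omega

end HA

/-- if every applicant has an acceptable house and `x` is the maximum
cardinality of a matching (witnessed by the maximum matching `M₀`), then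
(i) there is a capacity increase vector `r ≥ 0` with `|r|₁ = n - x` such that the
instance with capacities `q + r` admits a perfect and Pareto-optimal matching, and
(ii) for every capacity change vector `r` with `|r|₁ < n - x`, the instance with
capacities `q + r` admits no perfect matching. -/
theorem minSum_pareto_perfect {A H : Type*} [Fintype A] [Fintype H] (I : HA A H)
    (hacc : ∀ a, I.pref a ≠ [])
    (M₀ : A → Option H) (hM₀ : I.IsMatching M₀)
    (hmax : ∀ M', I.IsMatching M' → HA.size M' ≤ HA.size M₀) :
    (∃ r : H → ℕ, (∑ h, r h) = Fintype.card A - HA.size M₀ ∧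
      ∃ M, (HA.mk I.pref fun h => I.cap h + r h).IsMatching M ∧ HA.Perfect M ∧
        (HA.mk I.pref fun h => I.cap h + r h).ParetoOptimal M) ∧
    (∀ r : H → ℤ, (∀ h, 0 ≤ (I.cap h : ℤ) + r h) →
      (∑ h, (r h).natAbs) < Fintype.card A - HA.size M₀ →
      ¬ ∃ M, (HA.mk I.pref fun h => ((I.cap h : ℤ) + r h).toNat).IsMatching M ∧
        HA.Perfect M) := by
  classical
  have hkey : ∀ N : A → H, (∀ a, N a ∈ I.pref a) →
      Fintype.card A ≤ HA.size M₀ + I.deff N :=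
    fun N hN => HA.key I N hN M₀ hmax
  constructor
  · -- Part (i)
    set B := ∑ a : A, (I.pref a).length with hB
    set Φ : (A → H) → ℕ := fun N => ∑ a, (I.pref a).idxOf (N a) with hΦ
    set F : (A → H) → ℕ := fun N => I.deff N * (B + 1) + Φ N with hF
    set N₀ : A → H := fun a => (M₀ a).getD ((I.pref a).head (hacc a)) with hN₀
    have hN₀valid : ∀ a, N₀ a ∈ I.pref a := by
      intro a
      cases hMa : M₀ a with
      | none => simp only [hN₀, hMa, Option.getD_none]; exact List.head_mem _
      | some h =>
        simp only [hN₀, hMa, Option.getD_some]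
        exact hM₀.1 a h hMa
    set s : Finset (A → H) := univ.filter (fun N => ∀ a, N a ∈ I.pref a) with hs
    have hsne : s.Nonempty := ⟨N₀, by simp [hs, hN₀valid]⟩
    obtain ⟨N, hNs, hNmin⟩ := s.exists_min_image F hsne
    have hNvalid : ∀ a, N a ∈ I.pref a := (mem_filter.mp hNs).2
    -- the minimizer minimizes deff
    have hdmin : ∀ N' ∈ s, I.deff N ≤ I.deff N' := by
      intro N' hN'
      by_contra hlt
      push_neg at hlt
      have hΦle : Φ N' ≤ B :=
        Finset.sum_le_sum fun a _ =>
          le_of_lt (List.idxOf_lt_length_iff.mpr ((mem_filter.mp hN').2 a))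
      have h1 : F N' < F N := by
        have : I.deff N' + 1 ≤ I.deff N := hlt
        calc F N' = I.deff N' * (B + 1) + Φ N' := rfl
          _ ≤ I.deff N' * (B + 1) + B := by omega
          _ < (I.deff N' + 1) * (B + 1) := by ring_nf; omega
          _ ≤ I.deff N * (B + 1) := Nat.mul_le_mul_right _ this
          _ ≤ F N := Nat.le_add_right _ _
      exact absurd (hNmin N' hN') (not_le.mpr h1)
    -- deff N₀ ≤ n - x
    set U : Finset A := univ.filter fun a => M₀ a = none with hU
    have hUcard : HA.size M₀ + U.card = Fintype.card A := by
      rw [HA.size, hU, ← card_univ]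
      have : (univ.filter fun a => M₀ a = none)
          = univ.filter fun a => ¬ (M₀ a).isSome := by
        apply filter_congr
        intro a _
        simp [Option.not_isSome_iff_eq_none]
      rw [this]
      exact Finset.card_filter_add_card_filter_not _
    have hUsum : ∑ h, (U.filter fun a => (I.pref a).head (hacc a) = h).card = U.card :=
      (card_eq_sum_card_fiberwise (f := fun a => (I.pref a).head (hacc a))
        (fun a _ => mem_univ _)).symm
    have hN₀bound : ∀ h, (HA.fib N₀ h).card ≤ I.cap h
        + (U.filter fun a => (I.pref a).head (hacc a) = h).card := by
      intro h
      have hsub : HA.fib N₀ h ⊆ (univ.filter fun a => M₀ a = some h)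
          ∪ (U.filter fun a => (I.pref a).head (hacc a) = h) := by
        intro a ha
        have hna : N₀ a = h := HA.mem_fib.mp ha
        cases hMa : M₀ a with
        | none =>
          apply mem_union_right
          simp only [hU, mem_filter, mem_univ, true_and]
          refine ⟨hMa, ?_⟩
          simpa [hN₀, hMa] using hna
        | some h' =>
          apply mem_union_left
          simp only [mem_filter, mem_univ, true_and]
          rw [hMa]
          have : N₀ a = h' := by simp [hN₀, hMa]
          rw [← hna, this]
      calc (HA.fib N₀ h).card ≤ _ := card_le_card hsub
        _ ≤ (univ.filter fun a => M₀ a = some h).card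
            + (U.filter fun a => (I.pref a).head (hacc a) = h).card := card_union_le _ _
        _ ≤ _ := by
          have := hM₀.2 h
          omega
    have hdN₀ : I.deff N₀ ≤ U.card := by
      rw [HA.deff, ← hUsum]
      refine Finset.sum_le_sum fun h _ => ?_
      have := hN₀bound h
      omega
    have hdN : I.deff N = Fintype.card A - HA.size M₀ := by
      have h1 := hkey N hNvalid
      have h2 : I.deff N ≤ I.deff N₀ := hdmin N₀ (by simp [hs, hN₀valid])
      omega
    -- build the witness
    refine ⟨fun h => (HA.fib N h).card - I.cap h, hdN ▸ rfl, fun a => some (N a), ?_, ?_, ?_⟩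
    · constructor
      · intro a h hah
        injection hah with hh
        exact hh ▸ hNvalid a
      · intro h
        have : (univ.filter fun a => some (N a) = some h) = HA.fib N h := by
          ext a; simp [HA.fib]
        rw [this]
        show _ ≤ I.cap h + ((HA.fib N h).card - I.cap h)
        omega
    · intro a; rfl
    · constructor
      · constructor
        · intro a h hah
          injection hah with hh
          exact hh ▸ hNvalid a
        · intro h
          have : (univ.filter fun a => some (N a) = some h) = HA.fib N h := by
            ext a; simp [HA.fib]
          rw [this]
          show _ ≤ I.cap h + ((HA.fib N h).card - I.cap h)
          omega
      · rintro M' hM' ⟨hall, a₀, hstr⟩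
        -- extract N'
        have hext : ∀ a, M' a = some ((M' a).getD (N a)) ∧
            (I.pref a).idxOf ((M' a).getD (N a)) ≤ (I.pref a).idxOf (N a) := by
          intro a
          rcases hall a with heq | hb
          · rw [heq]; exact ⟨rfl, le_refl _⟩
          · cases hMa : M' a with
            | none => rw [hMa] at hb; exact absurd hb (by simp [Better])
            | some h' =>
              rw [hMa] at hb
              obtain ⟨_, hlt⟩ := hb
              exact ⟨rfl, le_of_lt hlt⟩
        set N' : A → H := fun a => (M' a).getD (N a) with hN'
        have hMeq' : ∀ a, M' a = some (N' a) := fun a => (hext a).1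
        have hN'valid : ∀ a, N' a ∈ I.pref a := fun a => hM'.1 a (N' a) (hext a).1
        have hN's : N' ∈ s := by simp [hs, hN'valid]
        have hstr' : (I.pref a₀).idxOf (N' a₀) < (I.pref a₀).idxOf (N a₀) := by
          cases hMa : M' a₀ with
          | none => rw [hMa] at hstr; exact absurd hstr (by simp [Better])
          | some h' =>
            rw [hMa] at hstr
            obtain ⟨_, hlt⟩ := hstr
            simpa [hN', hMa] using hlt
        have hdle : I.deff N' ≤ I.deff N := by
          refine Finset.sum_le_sum fun h _ => ?_
          have hfib' : HA.fib N' h = univ.filter fun a => M' a = some h := by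
            ext a
            simp only [HA.mem_fib, mem_filter, mem_univ, true_and]
            constructor
            · intro ha; rw [hMeq' a, ha]
            · intro ha
              have := hMeq' a
              rw [ha] at this
              injection this with hh
              exact hh.symm
          have hcap := hM'.2 h
          simp only [hfib'] at *
          omega
        have hΦlt : Φ N' < Φ N := by
          refine Finset.sum_lt_sum (fun a _ => (hext a).2) ⟨a₀, mem_univ _, hstr'⟩
        have hFlt : F N' < F N := by
          have : I.deff N' * (B + 1) ≤ I.deff N * (B + 1) := Nat.mul_le_mul_right _ hdle
          calc F N' = I.deff N' * (B + 1) + Φ N' := rfl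
            _ < I.deff N * (B + 1) + Φ N := by omega
            _ = F N := rfl
        exact absurd (hNmin N' hN's) (not_le.mpr hFlt)
  · -- Part (ii)
    rintro r hpos hsum ⟨M, hM, hperf⟩
    set N : A → H := fun a => (M a).getD ((I.pref a).head (hacc a)) with hN
    have hMeq : ∀ a, M a = some (N a) := by
      intro a
      obtain ⟨h, hh⟩ := Option.isSome_iff_exists.mp (hperf a)
      rw [hh]; simp [hN, hh]
    have hNvalid : ∀ a, N a ∈ I.pref a := fun a => hM.1 a (N a) (hMeq a)
    have hdle : I.deff N ≤ ∑ h, (r h).natAbs := by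
      refine Finset.sum_le_sum fun h _ => ?_
      have hfib' : HA.fib N h = univ.filter fun a => M a = some h := by
        ext a
        simp only [HA.mem_fib, mem_filter, mem_univ, true_and]
        constructor
        · intro ha; rw [hMeq a, ha]
        · intro ha
          have := hMeq a
          rw [ha] at this
          injection this with hh
          exact hh.symm
      have hcap := hM.2 h
      simp only [hfib'] at *
      omega
    have := hkey N hNvalid
    omega
end
end

section
/- Let I = (A, H, (≻_a), q) be a capacitated house allocation instance. Call a matching M of I admissible if: every edge of M lies in the first/second-choice multigraph G' of the instance; every house h that has at least q[h] admirers is matched in M to exactly q[h] applicants, all of whom are admirers of h; and every house h that has at most q[h] admirers has all of its admirers matched to it in M. Let x be the maximum cardinality of an admissible matching of I, and let I⁺ be the instance obtained from I by increasing the capacity of one house by one (note that the first/second-choice multigraph of I⁺ may differ from G'). Then the maximum cardinality of an admissible matching of I⁺ is at most x + 1. -/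
noncomputable section

open Finset

attribute [local instance] Classical.propDecidable

lemma find?_mono' {H : Type*} (p q : H → Bool) (hpq : ∀ x, p x = true → q x = true) :
    ∀ (l : List H) (h : H), l.find? q = some h → p h = true → l.find? p = some h := by
  intro l
  induction l with
  | nil => intro h hq _; simp at hq
  | cons x xs ih =>
    intro h hq hp
    by_cases hqx : q x = true
    · rw [List.find?_cons_of_pos hqx] at hq
      obtain rfl : x = h := by injection hq
      rw [List.find?_cons_of_pos hp]
    · have hpx : ¬ p x = true := fun h' => hqx (hpq x h')
      rw [List.find?_cons_of_neg (by simpa using hqx)] at hq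
      rw [List.find?_cons_of_neg (by simpa using hpx)]
      exact ih h hq hp

lemma HA.sOpt_def {A H : Type*} [Fintype A] (I : HA A H) (a : A) :
    I.sOpt a = match (I.pref a).head? with
      | none => none
      | some h =>
        if (I.admirers h).card ≤ I.cap h then some h
        else (I.pref a).find? fun h' => decide ((I.admirers h').card < I.cap h') := rfl

lemma HA.sOpt_nil {A H : Type*} [Fintype A] (I : HA A H) (a : A) (hp : I.pref a = []) :
    I.sOpt a = none := by
  rw [HA.sOpt_def, hp]
  rfl

lemma HA.sOpt_cons {A H : Type*} [Fintype A] (I : HA A H) (a : A) (h₁ : H) (t : List H)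
    (hp : I.pref a = h₁ :: t) :
    I.sOpt a = if (I.admirers h₁).card ≤ I.cap h₁ then some h₁
      else (h₁ :: t).find? fun h' => decide ((I.admirers h').card < I.cap h') := by
  rw [HA.sOpt_def, hp]
  rfl

lemma edge_transfer {A H : Type*} [Fintype A] (I : HA A H) (h₀ : H) (a : A) (h : H)
    (hyp1 : h = h₀ → I.fOpt a ≠ some h₀ → (I.admirers h₀).card < I.cap h₀)
    (hG : (HA.mk I.pref fun x => if x = h₀ then I.cap x + 1 else I.cap x).InG' a h) :
    I.InG' a h := by
  set I' : HA A H := HA.mk I.pref fun x => if x = h₀ then I.cap x + 1 else I.cap x with hI'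
  have hprefeq : ∀ b, I'.pref b = I.pref b := fun _ => rfl
  have hfeq : ∀ b, I'.fOpt b = I.fOpt b := fun _ => rfl
  have hadmeq : ∀ x, I'.admirers x = I.admirers x := fun _ => rfl
  have hcapeq : ∀ x, I'.cap x = if x = h₀ then I.cap x + 1 else I.cap x := fun _ => rfl
  have hcaple : ∀ x, I.cap x ≤ I'.cap x := by
    intro x
    rw [hcapeq]
    split_ifs <;> omega
  rcases hG with hf | hs
  · exact Or.inl hf
  · rcases hp : I.pref a with _ | ⟨h₁, t⟩
    · rw [HA.sOpt_nil I' a hp] at hs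
      exact absurd hs (by simp)
    · have hf₁ : I.fOpt a = some h₁ := by simp [HA.fOpt, hp]
      rw [HA.sOpt_cons I' a h₁ t hp] at hs
      rw [hadmeq] at hs
      split_ifs at hs with hb
      · obtain rfl : h₁ = h := by injection hs
        exact Or.inl hf₁
      · -- hs : find? over cap' = some h
        have hph := List.find?_some hs
        have hph2 : (I.admirers h).card < I'.cap h := by
          rw [hadmeq] at hph; simpa using hph
        have hph' : (I.admirers h).card < I.cap h := by
          by_cases hh : h = h₀
          · by_cases h₁₀ : h₁ = h₀
            · exfalso
              apply hb
              rw [hcapeq, if_pos h₁₀]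
              rw [hcapeq, if_pos hh] at hph2
              rw [h₁₀, ← hh]
              omega
            · have := hyp1 hh (by rw [hf₁]; simp [h₁₀])
              rw [← hh] at this
              exact this
          · rw [hcapeq, if_neg hh] at hph2
            exact hph2
        right
        rw [HA.sOpt_cons I a h₁ t hp]
        rw [if_neg (by have := hcaple h₁; omega)]
        refine find?_mono' _ _ ?_ _ h hs (by simpa using hph')
        intro x hx
        simp only [decide_eq_true_eq, hadmeq] at hx ⊢
        exact lt_of_lt_of_le hx (hcaple x)

lemma mem_matchedTo {A H : Type*} [Fintype A] (M : A → Option H) (h : H) (a : A) :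
    a ∈ HA.matchedTo M h ↔ M a = some h := by
  simp [HA.matchedTo]

lemma mem_admirers' {A H : Type*} [Fintype A] (I : HA A H) (h : H) (a : A) :
    a ∈ I.admirers h ↔ I.fOpt a = some h := by
  simp [HA.admirers]

/-- if `M` is a maximum-cardinality admissible matching of `I` and `I⁺` is
obtained from `I` by increasing the capacity of one house `h₀` by one (admissibility of
matchings of `I⁺` being taken with respect to the first/second-choice multigraph and
admirers of `I⁺`), then every admissible matching of `I⁺` has cardinality at most
`|M| + 1`. -/
theorem admissible_max_card_increase {A H : Type*} [Fintype A] (I : HA A H) (h₀ : H)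
    (M : A → Option H) (hM : I.Admissible M)
    (hmax : ∀ M', I.Admissible M' → HA.size M' ≤ HA.size M) :
    ∀ M', (HA.mk I.pref fun h => if h = h₀ then I.cap h + 1 else I.cap h).Admissible M' →
      HA.size M' ≤ HA.size M + 1 := by
  intro M' hM'
  set I' : HA A H := HA.mk I.pref fun h => if h = h₀ then I.cap h + 1 else I.cap h with hI'
  obtain ⟨⟨hpref', hcap'⟩, hG', h3', h4'⟩ := hM'
  have hcapeq : ∀ x, I'.cap x = if x = h₀ then I.cap x + 1 else I.cap x := fun _ => rfl
  have hadmeq : ∀ x, I'.admirers x = I.admirers x := fun _ => rfl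
  have hfeq : ∀ b, I'.fOpt b = I.fOpt b := fun _ => rfl
  set S : Finset A := HA.matchedTo M' h₀ with hSdef
  have hScap : S.card ≤ I.cap h₀ + 1 := by
    have := hcap' h₀
    rw [hcapeq, if_pos rfl] at this
    exact this
  by_cases hS : S.card ≤ I.cap h₀
  · -- M' itself is admissible in I
    have hd : (I.admirers h₀).card ≤ I.cap h₀ := by
      by_contra hlt
      push_neg at hlt
      have h3 := (h3' h₀ (by rw [hcapeq, if_pos rfl, hadmeq]; omega)).1
      rw [hcapeq, if_pos rfl] at h3
      rw [← hSdef] at h3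
      omega
    have hadm_sub : I.admirers h₀ ⊆ S := by
      intro b hb
      rw [hSdef, mem_matchedTo]
      exact h4' h₀ (by rw [hcapeq, if_pos rfl, hadmeq]; omega) b (by rw [hadmeq]; exact hb)
    have hMadm : I.Admissible M' := by
      refine ⟨⟨hpref', ?_⟩, ?_, ?_, ?_⟩
      · intro h
        by_cases hh : h = h₀
        · rw [hh]; exact hS
        · have := hcap' h
          rw [hcapeq, if_neg hh] at this
          exact this
      · intro a h hMa
        refine edge_transfer I h₀ a h ?_ (hG' a h hMa)
        intro hhh hfa
        have haS : a ∈ S := by rw [hSdef, mem_matchedTo, ← hhh]; exact hMa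
        have hnadm : a ∉ I.admirers h₀ := by rw [mem_admirers']; exact hfa
        have hins : insert a (I.admirers h₀) ⊆ S := by
          rw [Finset.insert_subset_iff]; exact ⟨haS, hadm_sub⟩
        have := Finset.card_le_card hins
        rw [Finset.card_insert_of_notMem hnadm] at this
        omega
      · intro h hh
        by_cases hcase : h = h₀
        · subst hcase
          have hSeq : S = I.admirers h := by
            refine (Finset.eq_of_subset_of_card_le hadm_sub ?_).symm
            omega
          constructor
          · rw [← hSdef, hSeq]; omega
          · intro b hb
            rw [← hSdef, hSeq, mem_admirers'] at hb
            exact hb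
        · have h3 := h3' h (by rw [hcapeq, if_neg hcase, hadmeq]; exact hh)
          rw [hcapeq, if_neg hcase] at h3
          exact ⟨h3.1, fun b hb => h3.2 b hb⟩
      · intro h hh b hb
        by_cases hcase : h = h₀
        · subst hcase
          exact h4' h (by rw [hcapeq, if_pos rfl, hadmeq]; omega) b (by rw [hadmeq]; exact hb)
        · exact h4' h (by rw [hcapeq, if_neg hcase, hadmeq]; exact hh) b (by rw [hadmeq]; exact hb)
    exact le_trans (hmax M' hMadm) (Nat.le_succ _)
  · -- S.card = cap h₀ + 1
    push_neg at hS
    have hS1 : S.card = I.cap h₀ + 1 := by omega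
    by_cases hex : ∃ a₀ ∈ S, I.fOpt a₀ ≠ some h₀
    · obtain ⟨a₀, ha₀S, ha₀f⟩ := hex
      have hMa₀ : M' a₀ = some h₀ := by rw [hSdef, mem_matchedTo] at ha₀S; exact ha₀S
      have hd : (I.admirers h₀).card ≤ I.cap h₀ := by
        by_contra hlt
        push_neg at hlt
        have h3 := (h3' h₀ (by rw [hcapeq, if_pos rfl, hadmeq]; omega)).2 a₀
          (by rw [← hSdef]; exact ha₀S)
        exact ha₀f h3
      have hadm_sub : I.admirers h₀ ⊆ S := by
        intro b hb
        rw [hSdef, mem_matchedTo]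
        exact h4' h₀ (by rw [hcapeq, if_pos rfl, hadmeq]; omega) b (by rw [hadmeq]; exact hb)
      have ha₀nadm : a₀ ∉ I.admirers h₀ := by rw [mem_admirers']; exact ha₀f
      set M'' : A → Option H := fun a => if a = a₀ then none else M' a with hM''def
      have hM''eq : ∀ a, a ≠ a₀ → M'' a = M' a := by intro a ha; simp [hM''def, ha]
      have hM''a₀ : M'' a₀ = none := by simp [hM''def]
      have hMTerase : ∀ h, HA.matchedTo M'' h = (HA.matchedTo M' h).erase a₀ := by
        intro h
        ext x
        rw [Finset.mem_erase, mem_matchedTo, mem_matchedTo]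
        by_cases hx : x = a₀ <;> simp [hM''def, hx]
      have hsz : HA.size M' ≤ HA.size M'' + 1 := by
        unfold HA.size
        have hfilt : (univ.filter fun a => (M'' a).isSome) =
            (univ.filter fun a => (M' a).isSome).erase a₀ := by
          ext x
          rw [Finset.mem_erase]
          by_cases hx : x = a₀ <;> simp [hM''def, hx, hMa₀]
        have hmem : a₀ ∈ univ.filter fun a => (M' a).isSome := by simp [hMa₀]
        rw [hfilt, Finset.card_erase_of_mem hmem]
        have := Finset.card_pos.mpr ⟨a₀, hmem⟩
        omega
      have hMadm : I.Admissible M'' := by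
        refine ⟨⟨?_, ?_⟩, ?_, ?_, ?_⟩
        · intro a h hMa
          by_cases ha : a = a₀
          · rw [ha, hM''a₀] at hMa; exact absurd hMa (by simp)
          · rw [hM''eq a ha] at hMa; exact hpref' a h hMa
        · intro h
          have : (univ.filter fun a => M'' a = some h) = HA.matchedTo M'' h := rfl
          rw [this, hMTerase]
          by_cases hh : h = h₀
          · rw [hh, ← hSdef, Finset.card_erase_of_mem ha₀S, hS1]
            omega
          · have := hcap' h
            rw [hcapeq, if_neg hh] at this
            exact le_trans (Finset.card_le_card (Finset.erase_subset _ _)) this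
        · intro a h hMa
          by_cases ha : a = a₀
          · rw [ha, hM''a₀] at hMa; exact absurd hMa (by simp)
          · rw [hM''eq a ha] at hMa
            refine edge_transfer I h₀ a h ?_ (hG' a h hMa)
            intro hhh hfa
            have haS : a ∈ S := by rw [hSdef, mem_matchedTo, ← hhh]; exact hMa
            have hnadm : a ∉ I.admirers h₀ := by rw [mem_admirers']; exact hfa
            have hnadm2 : a ∉ insert a₀ (I.admirers h₀) := by
              rw [Finset.mem_insert]
              push_neg
              exact ⟨ha, hnadm⟩
            have hins : insert a (insert a₀ (I.admirers h₀)) ⊆ S := by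
              rw [Finset.insert_subset_iff, Finset.insert_subset_iff]
              exact ⟨haS, ha₀S, hadm_sub⟩
            have := Finset.card_le_card hins
            rw [Finset.card_insert_of_notMem hnadm2,
              Finset.card_insert_of_notMem ha₀nadm] at this
            omega
        · intro h hh
          rw [hMTerase]
          by_cases hcase : h = h₀
          · subst hcase
            have hdc : (I.admirers h).card = I.cap h := le_antisymm hd hh
            have hsub2 : I.admirers h ⊆ (HA.matchedTo M' h).erase a₀ := by
              intro b hb
              rw [Finset.mem_erase]
              refine ⟨?_, hadm_sub hb⟩
              intro hb2
              rw [hb2] at hb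
              exact ha₀nadm hb
            have hcard2 : ((HA.matchedTo M' h).erase a₀).card = I.cap h := by
              rw [Finset.card_erase_of_mem (by rw [← hSdef]; exact ha₀S), ← hSdef, hS1]
              omega
            have heq2 : (HA.matchedTo M' h).erase a₀ = I.admirers h := by
              refine (Finset.eq_of_subset_of_card_le hsub2 ?_).symm
              omega
            refine ⟨hcard2, ?_⟩
            intro b hb
            rw [heq2, mem_admirers'] at hb
            exact hb
          · have h3 := h3' h (by rw [hcapeq, if_neg hcase, hadmeq]; exact hh)
            rw [hcapeq, if_neg hcase] at h3
            have hnot : a₀ ∉ HA.matchedTo M' h := by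
              rw [mem_matchedTo, hMa₀]
              intro hc
              exact hcase (Option.some_injective _ hc).symm
            rw [Finset.erase_eq_of_notMem hnot]
            exact ⟨h3.1, fun b hb => h3.2 b hb⟩
        · intro h hh b hb
          by_cases hcase : h = h₀
          · subst hcase
            have hb2 := h4' h (by rw [hcapeq, if_pos rfl, hadmeq]; omega) b
              (by rw [hadmeq]; exact hb)
            have hba : b ≠ a₀ := by
              intro hc
              rw [hc] at hb
              exact ha₀nadm hb
            rw [hM''eq b hba]
            exact hb2
          · have hb2 := h4' h (by rw [hcapeq, if_neg hcase, hadmeq]; exact hh) b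
              (by rw [hadmeq]; exact hb)
            have hba : b ≠ a₀ := by
              intro hc
              rw [hc, hMa₀] at hb2
              exact hcase (Option.some_injective _ hb2.symm)
            rw [hM''eq b hba]
            exact hb2
      calc HA.size M' ≤ HA.size M'' + 1 := hsz
        _ ≤ HA.size M + 1 := by have := hmax M'' hMadm; omega
    · push_neg at hex
      have hSadm : S ⊆ I.admirers h₀ := by
        intro b hb
        rw [mem_admirers']
        exact hex b hb
      have hd : I.cap h₀ + 1 ≤ (I.admirers h₀).card := by
        have := Finset.card_le_card hSadm
        omega
      obtain ⟨a₀, ha₀S⟩ := Finset.card_pos.mp (by omega : 0 < S.card)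
      have hMa₀ : M' a₀ = some h₀ := by rw [hSdef, mem_matchedTo] at ha₀S; exact ha₀S
      have ha₀f : I.fOpt a₀ = some h₀ := hex a₀ ha₀S
      set M'' : A → Option H := fun a => if a = a₀ then none else M' a with hM''def
      have hM''eq : ∀ a, a ≠ a₀ → M'' a = M' a := by intro a ha; simp [hM''def, ha]
      have hM''a₀ : M'' a₀ = none := by simp [hM''def]
      have hMTerase : ∀ h, HA.matchedTo M'' h = (HA.matchedTo M' h).erase a₀ := by
        intro h
        ext x
        rw [Finset.mem_erase, mem_matchedTo, mem_matchedTo]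
        by_cases hx : x = a₀ <;> simp [hM''def, hx]
      have hsz : HA.size M' ≤ HA.size M'' + 1 := by
        unfold HA.size
        have hfilt : (univ.filter fun a => (M'' a).isSome) =
            (univ.filter fun a => (M' a).isSome).erase a₀ := by
          ext x
          rw [Finset.mem_erase]
          by_cases hx : x = a₀ <;> simp [hM''def, hx, hMa₀]
        have hmem : a₀ ∈ univ.filter fun a => (M' a).isSome := by simp [hMa₀]
        rw [hfilt, Finset.card_erase_of_mem hmem]
        have := Finset.card_pos.mpr ⟨a₀, hmem⟩
        omega
      have hMadm : I.Admissible M'' := by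
        refine ⟨⟨?_, ?_⟩, ?_, ?_, ?_⟩
        · intro a h hMa
          by_cases ha : a = a₀
          · rw [ha, hM''a₀] at hMa; exact absurd hMa (by simp)
          · rw [hM''eq a ha] at hMa; exact hpref' a h hMa
        · intro h
          have : (univ.filter fun a => M'' a = some h) = HA.matchedTo M'' h := rfl
          rw [this, hMTerase]
          by_cases hh : h = h₀
          · rw [hh, ← hSdef, Finset.card_erase_of_mem ha₀S, hS1]
            omega
          · have := hcap' h
            rw [hcapeq, if_neg hh] at this
            exact le_trans (Finset.card_le_card (Finset.erase_subset _ _)) this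
        · intro a h hMa
          by_cases ha : a = a₀
          · rw [ha, hM''a₀] at hMa; exact absurd hMa (by simp)
          · rw [hM''eq a ha] at hMa
            refine edge_transfer I h₀ a h ?_ (hG' a h hMa)
            intro hhh hfa
            exfalso
            have haS : a ∈ S := by rw [hSdef, mem_matchedTo, ← hhh]; exact hMa
            exact hfa (hex a haS)
        · intro h hh
          rw [hMTerase]
          by_cases hcase : h = h₀
          · subst hcase
            refine ⟨?_, ?_⟩
            · rw [Finset.card_erase_of_mem (by rw [← hSdef]; exact ha₀S), ← hSdef, hS1]
              omega
            · intro b hb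
              rw [Finset.mem_erase] at hb
              exact hex b (by rw [hSdef]; exact hb.2)
          · have h3 := h3' h (by rw [hcapeq, if_neg hcase, hadmeq]; exact hh)
            rw [hcapeq, if_neg hcase] at h3
            have hnot : a₀ ∉ HA.matchedTo M' h := by
              rw [mem_matchedTo, hMa₀]
              intro hc
              exact hcase (Option.some_injective _ hc).symm
            rw [Finset.erase_eq_of_notMem hnot]
            exact ⟨h3.1, fun b hb => h3.2 b hb⟩
        · intro h hh b hb
          by_cases hcase : h = h₀
          · subst hcase
            omega
          · have hb2 := h4' h (by rw [hcapeq, if_neg hcase, hadmeq]; exact hh) b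
              (by rw [hadmeq]; exact hb)
            have hba : b ≠ a₀ := by
              intro hc
              rw [hc, hMa₀] at hb2
              exact hcase (Option.some_injective _ hb2.symm)
            rw [hM''eq b hba]
            exact hb2
      calc HA.size M' ≤ HA.size M'' + 1 := hsz
        _ ≤ HA.size M + 1 := by have := hmax M'' hMadm; omega
end
end

section
/- Fix n ∈ ℕ and consider the capacitated house allocation instance with houses h_1, h_2, h_3 of capacities q[h_1] = 1, q[h_2] = 2, q[h_3] = n + 1, applicants a_1,…,a_{n+2} each with preference h_1 ≻ h_2 ≻ h_3, and an applicant b with preference h_2 ≻ h_1. Then every capacity increase vector r ≥ 0 such that the instance with capacities q + r admits a perfect popular matching satisfies |r|_1 ≥ n. -/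
noncomputable section

open Finset

attribute [local instance] Classical.propDecidable

/-- The example instance: houses `h₁ = 0, h₂ = 1, h₃ = 2` with capacities `c 0, c 1, c 2`;
applicants `a_1, …, a_{n+2}` (the `Sum.inl` applicants) each with preference
`h₁ ≻ h₂ ≻ h₃`, and an applicant `b` (the `Sum.inr` applicant) with preference
`h₂ ≻ h₁`. -/
def exampleInstance (n : ℕ) (c : Fin 3 → ℕ) : HA (Fin (n + 2) ⊕ Unit) (Fin 3) where
  pref := fun a =>
    match a with
    | Sum.inl _ => [0, 1, 2]
    | Sum.inr _ => [1, 0]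
  cap := c


section AuxLemmas

lemma memf {α : Type*} {p : α → Prop} {inst : DecidablePred p} {s : Finset α} {a : α} :
    a ∈ @Finset.filter α p inst s ↔ a ∈ s ∧ p a := @Finset.mem_filter α p inst s a

lemma idx_self {α : Type*} (inst : DecidableEq α) (a : α) (l : List α) :
    @List.idxOf α (@instBEqOfDecidableEq α inst) a (a :: l) = 0 :=
  by exact List.idxOf_cons_self

lemma idx_ne {α : Type*} (inst : DecidableEq α) {a b : α} (l : List α) (h : b ≠ a) :
    @List.idxOf α (@instBEqOfDecidableEq α inst) a (b :: l)
      = Nat.succ (@List.idxOf α (@instBEqOfDecidableEq α inst) a l) :=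
  by exact List.idxOf_cons_ne l h

lemma better_irrefl {H : Type*} (l : List H) (x : Option H) : ¬ Better l x x := by
  cases x with
  | none => exact id
  | some h => rintro ⟨-, hlt⟩; exact lt_irrefl _ hlt

lemma fin3_ne_01 : (0 : Fin 3) ≠ 1 := by simp
lemma fin3_ne_02 : (0 : Fin 3) ≠ 2 := by simp
lemma fin3_ne_12 : (1 : Fin 3) ≠ 2 := by simp

lemma fin3_cases (h0 : Fin 3) : h0 = 0 ∨ h0 = 1 ∨ h0 = 2 := by
  obtain ⟨v, hv⟩ := h0
  interval_cases v
  · exact Or.inl rfl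
  · exact Or.inr (Or.inl rfl)
  · exact Or.inr (Or.inr rfl)

lemma notB_to0 (o : Option (Fin 3)) : ¬ Better ([0, 1, 2] : List (Fin 3)) o (some 0) := by
  cases o with
  | none => exact id
  | some h => rintro ⟨-, hlt⟩; rw [idx_self] at hlt; omega

lemma notB_21 : ¬ Better ([0, 1, 2] : List (Fin 3)) (some 2) (some 1) := by
  rintro ⟨-, hlt⟩
  rw [idx_ne _ _ fin3_ne_02, idx_ne _ _ fin3_ne_12, idx_self,
    idx_ne _ _ fin3_ne_01, idx_self] at hlt
  omega

lemma notB_b01 : ¬ Better ([1, 0] : List (Fin 3)) (some 0) (some 1) := by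
  rintro ⟨-, hlt⟩
  rw [idx_ne _ _ (Ne.symm fin3_ne_01), idx_self, idx_self] at hlt
  omega

lemma B_01 : Better ([0, 1, 2] : List (Fin 3)) (some 0) (some 1) := by
  refine ⟨by simp, ?_⟩
  rw [idx_self, idx_ne _ _ fin3_ne_01, idx_self]
  omega

lemma B_12 : Better ([0, 1, 2] : List (Fin 3)) (some 1) (some 2) := by
  refine ⟨by simp, ?_⟩
  rw [idx_ne _ _ fin3_ne_01, idx_self, idx_ne _ _ fin3_ne_02,
    idx_ne _ _ fin3_ne_12, idx_self]
  omega

lemma B_b10 : Better ([1, 0] : List (Fin 3)) (some 1) (some 0) := by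
  refine ⟨by simp, ?_⟩
  rw [idx_self, idx_ne _ _ (Ne.symm fin3_ne_01), idx_self]
  omega

lemma B_0any (o : Option (Fin 3)) (ho : o ≠ some 0) :
    Better ([0, 1, 2] : List (Fin 3)) (some 0) o := by
  cases o with
  | none => exact (by simp : (0 : Fin 3) ∈ [0, 1, 2])
  | some h =>
    refine ⟨by simp, ?_⟩
    rcases fin3_cases h with rfl | rfl | rfl
    · exact absurd rfl ho
    · rw [idx_self, idx_ne _ _ fin3_ne_01, idx_self]
      omega
    · rw [idx_self, idx_ne _ _ fin3_ne_02, idx_ne _ _ fin3_ne_12, idx_self]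
      omega

lemma card_filter_ieq {α : Type*} {p : α → Prop} (h1 h2 : DecidablePred p) (s : Finset α) :
    (@Finset.filter α p h1 s).card = (@Finset.filter α p h2 s).card := by
  have : h1 = h2 := funext fun a => Subsingleton.elim _ _
  rw [this]

lemma card_le_card_of_forall {α : Type*} {s t : Finset α} (h : ∀ a ∈ s, a ∈ t) :
    s.card ≤ t.card :=
  Finset.card_le_card h

lemma card_le_of_swap {α : Type*} [DecidableEq α] {s t : Finset α} {w v : α}
    (hv : v ∈ t) (hsub : ∀ a ∈ s, a ∈ insert w (t.erase v)) : s.card ≤ t.card := by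
  have h1 := Finset.card_le_card hsub
  have h2 := Finset.card_insert_le w (t.erase v)
  have h3 := Finset.card_erase_of_mem hv
  have h4 : 0 < t.card := Finset.card_pos.mpr ⟨v, hv⟩
  omega

lemma dom_helper {A H : Type*} [Fintype A] (I : HA A H) (M M' : A → Option H)
    (W B : Finset A)
    (hW : ∀ a, Better (I.pref a) (M a) (M' a) → a ∈ W)
    (hB : ∀ a ∈ B, Better (I.pref a) (M' a) (M a))
    (hcard : W.card < B.card) : I.Dominates M' M := by
  have h1 : (univ.filter fun a => Better (I.pref a) (M a) (M' a)).card ≤ W.card :=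
    card_le_card fun a ha => hW a (memf.mp ha).2
  have h2 : B.card ≤ (univ.filter fun a => Better (I.pref a) (M' a) (M a)).card :=
    card_le_card fun a ha => memf.mpr ⟨mem_univ a, hB a ha⟩
  exact lt_of_le_of_lt h1 (lt_of_lt_of_le hcard h2)

lemma toInl {n : ℕ} (x : Fin (n + 2) ⊕ Unit) (hx : x ≠ Sum.inr ()) :
    ∃ j, x = Sum.inl j := by
  cases x with
  | inl j => exact ⟨j, rfl⟩
  | inr u => cases u; exact absurd rfl hx

end AuxLemmas

/-- with initial capacities `q[h₁] = 1`, `q[h₂] = 2`, `q[h₃] = n + 1`,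
every capacity increase vector `r ≥ 0` such that the instance with capacities `q + r`
admits a perfect popular matching satisfies `|r|₁ ≥ n`. -/
theorem increase_only_needs_n (n : ℕ) (r : Fin 3 → ℕ)
    (h : ∃ M, HA.Perfect M ∧
      (exampleInstance n fun h => ![1, 2, n + 1] h + r h).Popular M) :
    n ≤ ∑ h, r h := by
  by_contra hn
  push_neg at hn
  rw [Fin.sum_univ_three] at hn
  obtain ⟨M, hperf, hmatch, hpop⟩ := h
  -- capacity facts
  have hcap0 : (univ.filter fun a => M a = some (0 : Fin 3)).card ≤ 1 + r 0 := by
    have h1 := hmatch.2 0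
    have h2 : (exampleInstance n fun h => ![1, 2, n + 1] h + r h).cap 0 = 1 + r 0 := by
      show ![1, 2, n + 1] 0 + r 0 = 1 + r 0
      simp
    rw [h2] at h1
    exact le_trans (le_of_eq (card_filter_ieq _ _ _)) h1
  have hcap1 : (univ.filter fun a => M a = some (1 : Fin 3)).card ≤ 2 + r 1 := by
    have h1 := hmatch.2 1
    have h2 : (exampleInstance n fun h => ![1, 2, n + 1] h + r h).cap 1 = 2 + r 1 := by
      show ![1, 2, n + 1] 1 + r 1 = 2 + r 1
      simp
    rw [h2] at h1
    exact le_trans (le_of_eq (card_filter_ieq _ _ _)) h1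
  -- partition fact
  have hdisj01 : Disjoint (univ.filter fun a => M a = some (0 : Fin 3))
      (univ.filter fun a => M a = some (1 : Fin 3)) := by
    rw [Finset.disjoint_left]
    intro a ha hb
    have h1 := (memf.mp ha).2
    have h2 := (memf.mp hb).2
    rw [h1] at h2
    exact fin3_ne_01 (Option.some.inj h2)
  have hdisj02 : Disjoint (univ.filter fun a => M a = some (0 : Fin 3))
      (univ.filter fun a => M a = some (2 : Fin 3)) := by
    rw [Finset.disjoint_left]
    intro a ha hb
    have h1 := (memf.mp ha).2
    have h2 := (memf.mp hb).2
    rw [h1] at h2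
    exact fin3_ne_02 (Option.some.inj h2)
  have hdisj12 : Disjoint (univ.filter fun a => M a = some (1 : Fin 3))
      (univ.filter fun a => M a = some (2 : Fin 3)) := by
    rw [Finset.disjoint_left]
    intro a ha hb
    have h1 := (memf.mp ha).2
    have h2 := (memf.mp hb).2
    rw [h1] at h2
    exact fin3_ne_12 (Option.some.inj h2)
  have hpart : (univ.filter fun a => M a = some (0 : Fin 3)).card
      + (univ.filter fun a => M a = some (1 : Fin 3)).card
      + (univ.filter fun a => M a = some (2 : Fin 3)).card = n + 3 := by
    have hu : (univ : Finset (Fin (n + 2) ⊕ Unit))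
        = (univ.filter fun a => M a = some (0 : Fin 3))
          ∪ ((univ.filter fun a => M a = some (1 : Fin 3))
            ∪ (univ.filter fun a => M a = some (2 : Fin 3))) := by
      ext a
      simp only [mem_univ, mem_union, mem_filter, true_and, true_iff]
      obtain ⟨h0, hh⟩ := Option.isSome_iff_exists.mp (hperf a)
      rcases fin3_cases h0 with rfl | rfl | rfl
      · exact Or.inl hh
      · exact Or.inr (Or.inl hh)
      · exact Or.inr (Or.inr hh)
    have hcardu : (univ : Finset (Fin (n + 2) ⊕ Unit)).card = n + 3 := by simp
    rw [hu, Finset.card_union_of_disjoint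
        (Finset.disjoint_union_right.mpr ⟨hdisj01, hdisj02⟩),
      Finset.card_union_of_disjoint hdisj12] at hcardu
    omega
  set I := exampleInstance n fun h => ![1, 2, n + 1] h + r h with hI
  -- house 0 is full
  have hfull0 : (univ.filter fun a => M a = some (0 : Fin 3)).card = 1 + r 0 := by
    refine le_antisymm hcap0 ?_
    by_contra hlt
    push_neg at hlt
    have hex : ∃ i : Fin (n + 2), M (Sum.inl i) ≠ some 0 := by
      by_contra hall
      push_neg at hall
      have hsub : (univ : Finset (Fin (n + 2))).card
          ≤ (univ.filter fun a => M a = some (0 : Fin 3)).card := by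
        refine Finset.card_le_card_of_injOn Sum.inl
          (fun i _ => memf.mpr ⟨mem_univ _, hall i⟩) ?_
        intro x _ y _ hxy
        exact Sum.inl_injective hxy
      rw [Finset.card_univ, Fintype.card_fin] at hsub
      omega
    obtain ⟨i, hi⟩ := hex
    set M' : Fin (n + 2) ⊕ Unit → Option (Fin 3) :=
      fun a => if a = Sum.inl i then some 0 else M a with hM'
    have hM'i : M' (Sum.inl i) = some 0 := by simp [hM']
    have hM'ne : ∀ a, a ≠ Sum.inl i → M' a = M a := fun a ha => by simp [hM', ha]
    refine hpop M' ⟨?_, ?_⟩ ?_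
    · intro a h0 hah
      rcases eq_or_ne a (Sum.inl i) with hcase | hcase
      · subst hcase
        rw [hM'i] at hah
        obtain rfl : (0 : Fin 3) = h0 := Option.some.inj hah
        show (0 : Fin 3) ∈ ([0, 1, 2] : List (Fin 3))
        simp
      · rw [hM'ne a hcase] at hah
        exact hmatch.1 a h0 hah
    · intro h0
      by_cases hh : h0 = 0
      · subst hh
        have hc : I.cap 0 = 1 + r 0 := by
          rw [hI]
          show ![1, 2, n + 1] 0 + r 0 = 1 + r 0
          simp
        rw [hc]
        refine le_trans (card_le_card_of_forall fun a ha => ?_)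
          (le_trans (Finset.card_insert_le (Sum.inl i)
            (univ.filter fun a => M a = some (0 : Fin 3))) (by omega))
        have ha2 : M' a = some 0 := (memf.mp ha).2
        rcases eq_or_ne a (Sum.inl i) with hcase | hcase
        · exact hcase ▸ mem_insert_self _ _
        · exact mem_insert_of_mem (memf.mpr
            ⟨mem_univ _, by rw [← hM'ne a hcase]; exact ha2⟩)
      · refine le_trans (card_le_card_of_forall fun a ha => ?_) (hmatch.2 h0)
        have ha2 : M' a = some h0 := (memf.mp ha).2
        rcases eq_or_ne a (Sum.inl i) with hcase | hcase
        · exfalso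
          rw [hcase, hM'i] at ha2
          exact hh (Option.some.inj ha2).symm
        · exact memf.mpr ⟨mem_univ _, by rw [← hM'ne a hcase]; exact ha2⟩
    · refine dom_helper I M M' ∅ {Sum.inl i} ?_ ?_ (by simp)
      · intro a hBa
        exfalso
        rcases eq_or_ne a (Sum.inl i) with hcase | hcase
        · subst hcase
          rw [hM'i] at hBa
          exact notB_to0 (M (Sum.inl i)) hBa
        · rw [hM'ne a hcase] at hBa
          exact better_irrefl _ _ hBa
      · intro a ha
        rw [mem_singleton] at ha
        subst ha
        rw [hM'i]
        exact B_0any (M (Sum.inl i)) hi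
  -- house 1 is full
  have hfull1 : (univ.filter fun a => M a = some (1 : Fin 3)).card = 2 + r 1 := by
    refine le_antisymm hcap1 ?_
    by_contra hlt
    push_neg at hlt
    have hs2 : 0 < (univ.filter fun a => M a = some (2 : Fin 3)).card := by omega
    obtain ⟨x, hxmem⟩ := Finset.card_pos.mp hs2
    have hx2 : M x = some 2 := (memf.mp hxmem).2
    have hxr : x ≠ Sum.inr () := by
      rintro rfl
      have hmem : (2 : Fin 3) ∈ ([1, 0] : List (Fin 3)) := hmatch.1 _ _ hx2
      simp only [List.mem_cons, List.not_mem_nil, or_false] at hmem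
      rcases hmem with hc | hc
      · exact fin3_ne_12 hc.symm
      · exact fin3_ne_02 hc.symm
    obtain ⟨j, rfl⟩ := toInl x hxr
    set M' : Fin (n + 2) ⊕ Unit → Option (Fin 3) :=
      fun a => if a = Sum.inl j then some 1 else M a with hM'
    have hM'j : M' (Sum.inl j) = some 1 := by simp [hM']
    have hM'ne : ∀ a, a ≠ Sum.inl j → M' a = M a := fun a ha => by simp [hM', ha]
    refine hpop M' ⟨?_, ?_⟩ ?_
    · intro a h0 hah
      rcases eq_or_ne a (Sum.inl j) with hcase | hcase
      · subst hcase
        rw [hM'j] at hah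
        obtain rfl : (1 : Fin 3) = h0 := Option.some.inj hah
        show (1 : Fin 3) ∈ ([0, 1, 2] : List (Fin 3))
        simp
      · rw [hM'ne a hcase] at hah
        exact hmatch.1 a h0 hah
    · intro h0
      by_cases hh : h0 = 1
      · subst hh
        have hc : I.cap 1 = 2 + r 1 := by
          rw [hI]
          show ![1, 2, n + 1] 1 + r 1 = 2 + r 1
          simp
        rw [hc]
        refine le_trans (card_le_card_of_forall fun a ha => ?_)
          (le_trans (Finset.card_insert_le (Sum.inl j)
            (univ.filter fun a => M a = some (1 : Fin 3))) (by omega))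
        have ha2 : M' a = some 1 := (memf.mp ha).2
        rcases eq_or_ne a (Sum.inl j) with hcase | hcase
        · exact hcase ▸ mem_insert_self _ _
        · exact mem_insert_of_mem (memf.mpr
            ⟨mem_univ _, by rw [← hM'ne a hcase]; exact ha2⟩)
      · refine le_trans (card_le_card_of_forall fun a ha => ?_) (hmatch.2 h0)
        have ha2 : M' a = some h0 := (memf.mp ha).2
        rcases eq_or_ne a (Sum.inl j) with hcase | hcase
        · exfalso
          rw [hcase, hM'j] at ha2
          exact hh (Option.some.inj ha2).symm
        · exact memf.mpr ⟨mem_univ _, by rw [← hM'ne a hcase]; exact ha2⟩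
    · refine dom_helper I M M' ∅ {Sum.inl j} ?_ ?_ (by simp)
      · intro a hBa
        exfalso
        rcases eq_or_ne a (Sum.inl j) with hcase | hcase
        · subst hcase
          rw [hM'j, hx2] at hBa
          exact notB_21 hBa
        · rw [hM'ne a hcase] at hBa
          exact better_irrefl _ _ hBa
      · intro a ha
        rw [mem_singleton] at ha
        subst ha
        rw [hM'j, hx2]
        exact B_12
  -- where is b?
  have hbsome := hperf (Sum.inr ())
  rw [Option.isSome_iff_exists] at hbsome
  obtain ⟨hb, hbM⟩ := hbsome
  have hbmem : hb = 1 ∨ hb = 0 := by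
    have hmem : hb ∈ ([1, 0] : List (Fin 3)) := hmatch.1 _ _ hbM
    simpa using hmem
  rcases hbmem with hb1 | hb0
  · -- CASE: b is matched to house 1; use the rotation x : 2→1, y : 1→0, z : 0→2
    rw [hb1] at hbM
    have hs2 : 0 < (univ.filter fun a => M a = some (2 : Fin 3)).card := by omega
    obtain ⟨x, hxmem⟩ := Finset.card_pos.mp hs2
    have hx2 : M x = some 2 := (memf.mp hxmem).2
    have hxr : x ≠ Sum.inr () := by
      rintro rfl
      rw [hbM] at hx2
      exact fin3_ne_12 (Option.some.inj hx2)
    have hbS1 : Sum.inr () ∈ (univ.filter fun a => M a = some (1 : Fin 3)) :=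
      memf.mpr ⟨mem_univ _, hbM⟩
    have hs1e : 0 < ((univ.filter fun a => M a = some (1 : Fin 3)).erase
        (Sum.inr ())).card := by
      rw [Finset.card_erase_of_mem hbS1]
      omega
    obtain ⟨y, hymem⟩ := Finset.card_pos.mp hs1e
    have hyr : y ≠ Sum.inr () := Finset.ne_of_mem_erase hymem
    have hy1 : M y = some 1 := (memf.mp (Finset.mem_of_mem_erase hymem)).2
    have hs0 : 0 < (univ.filter fun a => M a = some (0 : Fin 3)).card := by omega
    obtain ⟨z, hzmem⟩ := Finset.card_pos.mp hs0
    have hz0 : M z = some 0 := (memf.mp hzmem).2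
    have hzr : z ≠ Sum.inr () := by
      rintro rfl
      rw [hbM] at hz0
      exact fin3_ne_01 (Option.some.inj hz0).symm
    have hxy : x ≠ y := by
      rintro rfl; rw [hx2] at hy1; exact fin3_ne_12 (Option.some.inj hy1).symm
    have hxz : x ≠ z := by
      rintro rfl; rw [hx2] at hz0; exact fin3_ne_02 (Option.some.inj hz0).symm
    have hyz : y ≠ z := by
      rintro rfl; rw [hy1] at hz0; exact fin3_ne_01 (Option.some.inj hz0).symm
    obtain ⟨jx, rfl⟩ := toInl x hxr
    obtain ⟨jy, rfl⟩ := toInl y hyr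
    obtain ⟨jz, rfl⟩ := toInl z hzr
    set M' : Fin (n + 2) ⊕ Unit → Option (Fin 3) := fun a =>
      if a = Sum.inl jx then some 1
      else if a = Sum.inl jy then some 0
      else if a = Sum.inl jz then some 2
      else M a with hM'
    have hM'x : M' (Sum.inl jx) = some 1 := by simp [hM']
    have hM'y : M' (Sum.inl jy) = some 0 := by simp [hM', Ne.symm hxy]
    have hM'z : M' (Sum.inl jz) = some 2 := by simp [hM', Ne.symm hxz, Ne.symm hyz]
    have hM'ne : ∀ a, a ≠ Sum.inl jx → a ≠ Sum.inl jy → a ≠ Sum.inl jz → M' a = M a := by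
      intro a h1 h2 h3; simp [hM', h1, h2, h3]
    refine hpop M' ⟨?_, ?_⟩ ?_
    · intro a h0 hah
      rcases eq_or_ne a (Sum.inl jx) with hc1 | hc1
      · subst hc1; rw [hM'x] at hah
        obtain rfl : (1 : Fin 3) = h0 := Option.some.inj hah
        show (1 : Fin 3) ∈ ([0, 1, 2] : List (Fin 3)); simp
      rcases eq_or_ne a (Sum.inl jy) with hc2 | hc2
      · subst hc2; rw [hM'y] at hah
        obtain rfl : (0 : Fin 3) = h0 := Option.some.inj hah
        show (0 : Fin 3) ∈ ([0, 1, 2] : List (Fin 3)); simp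
      rcases eq_or_ne a (Sum.inl jz) with hc3 | hc3
      · subst hc3; rw [hM'z] at hah
        obtain rfl : (2 : Fin 3) = h0 := Option.some.inj hah
        show (2 : Fin 3) ∈ ([0, 1, 2] : List (Fin 3)); simp
      · rw [hM'ne a hc1 hc2 hc3] at hah
        exact hmatch.1 a h0 hah
    · intro h0
      rcases fin3_cases h0 with rfl | rfl | rfl
      · refine le_trans (card_le_of_swap (w := Sum.inl jy)
          (memf.mpr ⟨mem_univ _, hz0⟩) fun a ha => ?_) (hmatch.2 0)
        have ha2 : M' a = some 0 := (memf.mp ha).2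
        rcases eq_or_ne a (Sum.inl jx) with hc1 | hc1
        · exfalso; rw [hc1, hM'x] at ha2; exact fin3_ne_01 (Option.some.inj ha2).symm
        rcases eq_or_ne a (Sum.inl jy) with hc2 | hc2
        · exact hc2 ▸ mem_insert_self _ _
        rcases eq_or_ne a (Sum.inl jz) with hc3 | hc3
        · exfalso; rw [hc3, hM'z] at ha2; exact fin3_ne_02 (Option.some.inj ha2).symm
        · refine mem_insert_of_mem (Finset.mem_erase.mpr ⟨hc3, memf.mpr
            ⟨mem_univ _, ?_⟩⟩)
          rw [← hM'ne a hc1 hc2 hc3]; exact ha2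
      · refine le_trans (card_le_of_swap (w := Sum.inl jx)
          (memf.mpr ⟨mem_univ _, hy1⟩) fun a ha => ?_) (hmatch.2 1)
        have ha2 : M' a = some 1 := (memf.mp ha).2
        rcases eq_or_ne a (Sum.inl jx) with hc1 | hc1
        · exact hc1 ▸ mem_insert_self _ _
        rcases eq_or_ne a (Sum.inl jy) with hc2 | hc2
        · exfalso; rw [hc2, hM'y] at ha2; exact fin3_ne_01 (Option.some.inj ha2)
        rcases eq_or_ne a (Sum.inl jz) with hc3 | hc3
        · exfalso; rw [hc3, hM'z] at ha2; exact fin3_ne_12 (Option.some.inj ha2).symm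
        · refine mem_insert_of_mem (Finset.mem_erase.mpr ⟨hc2, memf.mpr
            ⟨mem_univ _, ?_⟩⟩)
          rw [← hM'ne a hc1 hc2 hc3]; exact ha2
      · refine le_trans (card_le_of_swap (w := Sum.inl jz)
          (memf.mpr ⟨mem_univ _, hx2⟩) fun a ha => ?_) (hmatch.2 2)
        have ha2 : M' a = some 2 := (memf.mp ha).2
        rcases eq_or_ne a (Sum.inl jx) with hc1 | hc1
        · exfalso; rw [hc1, hM'x] at ha2; exact fin3_ne_12 (Option.some.inj ha2)
        rcases eq_or_ne a (Sum.inl jy) with hc2 | hc2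
        · exfalso; rw [hc2, hM'y] at ha2; exact fin3_ne_02 (Option.some.inj ha2)
        rcases eq_or_ne a (Sum.inl jz) with hc3 | hc3
        · exact hc3 ▸ mem_insert_self _ _
        · refine mem_insert_of_mem (Finset.mem_erase.mpr ⟨hc1, memf.mpr
            ⟨mem_univ _, ?_⟩⟩)
          rw [← hM'ne a hc1 hc2 hc3]; exact ha2
    · refine dom_helper I M M' {Sum.inl jz} {Sum.inl jx, Sum.inl jy} ?_ ?_ ?_
      · intro a hBa
        rcases eq_or_ne a (Sum.inl jx) with hc1 | hc1
        · exfalso; subst hc1; rw [hM'x, hx2] at hBa; exact notB_21 hBa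
        rcases eq_or_ne a (Sum.inl jy) with hc2 | hc2
        · exfalso; subst hc2; rw [hM'y, hy1] at hBa; exact notB_to0 _ hBa
        rcases eq_or_ne a (Sum.inl jz) with hc3 | hc3
        · exact hc3 ▸ mem_singleton_self _
        · exfalso; rw [hM'ne a hc1 hc2 hc3] at hBa; exact better_irrefl _ _ hBa
      · intro a ha
        rcases Finset.mem_insert.mp ha with hc | hc
        · subst hc; rw [hM'x, hx2]; exact B_12
        · rw [mem_singleton] at hc; subst hc; rw [hM'y, hy1]; exact B_01
      · rw [card_singleton, Finset.card_pair (fun hc => hxy hc)]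
        omega
  · -- CASE: b is matched to house 0; swap b : 0→1 and some y : 1→0
    rw [hb0] at hbM
    have hs1 : 0 < (univ.filter fun a => M a = some (1 : Fin 3)).card := by omega
    obtain ⟨y, hymem⟩ := Finset.card_pos.mp hs1
    have hy1 : M y = some 1 := (memf.mp hymem).2
    have hyr : y ≠ Sum.inr () := by
      rintro rfl
      rw [hbM] at hy1
      exact fin3_ne_01 (Option.some.inj hy1)
    obtain ⟨jy, rfl⟩ := toInl y hyr
    set M' : Fin (n + 2) ⊕ Unit → Option (Fin 3) := fun a =>
      if a = Sum.inr () then some 1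
      else if a = Sum.inl jy then some 0
      else M a with hM'
    have hM'b : M' (Sum.inr ()) = some 1 := by simp [hM']
    have hM'y : M' (Sum.inl jy) = some 0 := by simp [hM']
    have hM'ne : ∀ a, a ≠ Sum.inr () → a ≠ Sum.inl jy → M' a = M a := by
      intro a h1 h2; simp [hM', h1, h2]
    refine hpop M' ⟨?_, ?_⟩ ?_
    · intro a h0 hah
      rcases eq_or_ne a (Sum.inr ()) with hc1 | hc1
      · subst hc1; rw [hM'b] at hah
        obtain rfl : (1 : Fin 3) = h0 := Option.some.inj hah
        show (1 : Fin 3) ∈ ([1, 0] : List (Fin 3)); simp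
      rcases eq_or_ne a (Sum.inl jy) with hc2 | hc2
      · subst hc2; rw [hM'y] at hah
        obtain rfl : (0 : Fin 3) = h0 := Option.some.inj hah
        show (0 : Fin 3) ∈ ([0, 1, 2] : List (Fin 3)); simp
      · rw [hM'ne a hc1 hc2] at hah
        exact hmatch.1 a h0 hah
    · intro h0
      rcases fin3_cases h0 with rfl | rfl | rfl
      · refine le_trans (card_le_of_swap (w := Sum.inl jy)
          (memf.mpr ⟨mem_univ _, hbM⟩) fun a ha => ?_) (hmatch.2 0)
        have ha2 : M' a = some 0 := (memf.mp ha).2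
        rcases eq_or_ne a (Sum.inr ()) with hc1 | hc1
        · exfalso; rw [hc1, hM'b] at ha2; exact fin3_ne_01 (Option.some.inj ha2).symm
        rcases eq_or_ne a (Sum.inl jy) with hc2 | hc2
        · exact hc2 ▸ mem_insert_self _ _
        · refine mem_insert_of_mem (Finset.mem_erase.mpr ⟨hc1, memf.mpr
            ⟨mem_univ _, ?_⟩⟩)
          rw [← hM'ne a hc1 hc2]; exact ha2
      · refine le_trans (card_le_of_swap (w := Sum.inr ())
          (memf.mpr ⟨mem_univ _, hy1⟩) fun a ha => ?_) (hmatch.2 1)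
        have ha2 : M' a = some 1 := (memf.mp ha).2
        rcases eq_or_ne a (Sum.inr ()) with hc1 | hc1
        · exact hc1 ▸ mem_insert_self _ _
        rcases eq_or_ne a (Sum.inl jy) with hc2 | hc2
        · exfalso; rw [hc2, hM'y] at ha2; exact fin3_ne_01 (Option.some.inj ha2)
        · refine mem_insert_of_mem (Finset.mem_erase.mpr ⟨hc2, memf.mpr
            ⟨mem_univ _, ?_⟩⟩)
          rw [← hM'ne a hc1 hc2]; exact ha2
      · refine le_trans (card_le_card_of_forall fun a ha => ?_) (hmatch.2 2)
        have ha2 : M' a = some 2 := (memf.mp ha).2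
        rcases eq_or_ne a (Sum.inr ()) with hc1 | hc1
        · exfalso; rw [hc1, hM'b] at ha2; exact fin3_ne_12 (Option.some.inj ha2)
        rcases eq_or_ne a (Sum.inl jy) with hc2 | hc2
        · exfalso; rw [hc2, hM'y] at ha2; exact fin3_ne_02 (Option.some.inj ha2)
        · refine memf.mpr ⟨mem_univ _, ?_⟩
          rw [← hM'ne a hc1 hc2]; exact ha2
    · refine dom_helper I M M' ∅ {Sum.inr ()} ?_ ?_ (by simp)
      · intro a hBa
        exfalso
        rcases eq_or_ne a (Sum.inr ()) with hc1 | hc1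
        · subst hc1; rw [hM'b, hbM] at hBa; exact notB_b01 hBa
        rcases eq_or_ne a (Sum.inl jy) with hc2 | hc2
        · subst hc2; rw [hM'y, hy1] at hBa; exact notB_to0 _ hBa
        · rw [hM'ne a hc1 hc2] at hBa; exact better_irrefl _ _ hBa
      · intro a ha
        rw [mem_singleton] at ha
        subst ha
        rw [hM'b, hbM]
        exact B_b10
end
end

section
/- Fix n ∈ ℕ and consider the capacitated house allocation instance with houses h_1, h_2, h_3 of capacities q[h_1] = 1, q[h_2] = 2, q[h_3] = n + 1, applicants a_1,…,a_{n+2} each with preference h_1 ≻ h_2 ≻ h_3, and an applicant b with preference h_2 ≻ h_1. After decreasing the capacity of h_2 by one (so that q'[h_2] = 1, all other capacities unchanged), the matching M = {(a_1, h_1), (b, h_2)} ∪ {(a_i, h_3) : i = 2,…,n+2} is a perfect popular matching of the modified instance. -/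
noncomputable section

open Finset

attribute [local instance] Classical.propDecidable

theorem beq_congr {α : Type*} (i1 i2 : DecidableEq α) :
    @instBEqOfDecidableEq α i1 = @instBEqOfDecidableEq α i2 := by
  congr 1
  exact Subsingleton.elim i1 i2

theorem filter_deceq {α : Type*} (s : Finset α) (p : α → Prop)
    {h1 h2 : DecidablePred p} :
    @Finset.filter α p h1 s = @Finset.filter α p h2 s := by
  ext a
  simp only [Finset.mem_filter]

/-- after decreasing the capacity of `h₂` from 2 to 1 (so that the
capacities are `1, 1, n + 1`), the matching `M = {(a₁, h₁), (b, h₂)} ∪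
{(a_i, h₃) : i = 2, …, n + 2}` is a perfect popular matching of the modified instance. -/
theorem decrease_gives_perfect_popular (n : ℕ) :
    let M : (Fin (n + 2) ⊕ Unit) → Option (Fin 3) := fun a =>
      match a with
      | Sum.inl i => if i = 0 then some 0 else some 2
      | Sum.inr _ => some 1
    HA.Perfect M ∧ (exampleInstance n ![1, 1, n + 1]).Popular M := by
  intro M
  have hM0 : M (Sum.inl 0) = some 0 := by simp [M]
  have hMi : ∀ i : Fin (n+2), i ≠ 0 → M (Sum.inl i) = some 2 := by
    intro i hi; simp [M, hi]
  have hMb : ∀ u, M (Sum.inr u) = some 1 := fun _ => rfl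
  set Inst := exampleInstance n ![1, 1, n + 1] with hInst
  have hcap0 : Inst.cap 0 = 1 := rfl
  have hcap1 : Inst.cap 1 = 1 := rfl
  have hcap2 : Inst.cap 2 = n + 1 := rfl
  have hprefl : ∀ i : Fin (n+2), Inst.pref (Sum.inl i) = [0,1,2] := fun _ => rfl
  have hprefr : ∀ u, Inst.pref (Sum.inr u) = [1,0] := fun _ => rfl
  have hmem3 : ∀ h : Fin 3, h ∈ ([0,1,2] : List (Fin 3)) := by decide
  refine ⟨?_, ⟨?_, ?_⟩, ?_⟩
  · rintro (i | u)
    · by_cases h : i = 0 <;> simp [M, h]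
    · simp [M]
  · -- edges acceptable
    rintro (i | u) h hm
    · rw [hprefl]; exact hmem3 h
    · rw [hMb u] at hm
      rw [hprefr u]
      injection hm with hh
      rw [← hh]
      decide
  · -- capacities
    intro h
    have h3 : h = 0 ∨ h = 1 ∨ h = 2 := by revert h; decide
    rcases h3 with rfl | rfl | rfl
    · rw [hcap0]
      refine le_trans (card_le_card (t := {Sum.inl 0}) ?_) (by simp)
      intro a ha
      simp only [mem_filter] at ha
      have ha2 := ha.2
      rcases a with i | u
      · by_cases hi : i = 0
        · simp [hi]
        · rw [hMi i hi] at ha2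
          exact absurd ha2 (by decide)
      · rw [hMb u] at ha2
        exact absurd ha2 (by decide)
    · rw [hcap1]
      refine le_trans (card_le_card (t := {Sum.inr ()}) ?_) (by simp)
      intro a ha
      simp only [mem_filter] at ha
      have ha2 := ha.2
      rcases a with i | u
      · by_cases hi : i = 0
        · rw [hi, hM0] at ha2; exact absurd ha2 (by decide)
        · rw [hMi i hi] at ha2; exact absurd ha2 (by decide)
      · simp
    · rw [hcap2]
      refine le_trans (card_le_card
          (t := ((univ : Finset (Fin (n+2))).erase 0).map ⟨Sum.inl, Sum.inl_injective⟩) ?_)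
        (le_of_eq ?_)
      · intro a ha
        simp only [mem_filter] at ha
        have ha2 := ha.2
        rcases a with i | u
        · by_cases hi : i = 0
          · rw [hi, hM0] at ha2; exact absurd ha2 (by decide)
          · simp [hi]
        · rw [hMb u] at ha2; exact absurd ha2 (by decide)
      · rw [card_map, card_erase_of_mem (mem_univ _), card_univ, Fintype.card_fin]
        omega
  · -- popularity
    intro M' hM' hdom
    have hcard0 : (univ.filter fun a => M' a = some (0:Fin 3)).card ≤ 1 := by
      have := hM'.2 0; rw [hcap0] at this
      exact le_trans (le_of_eq (congrArg Finset.card (filter_deceq _ _))) this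
    have hcard1 : (univ.filter fun a => M' a = some (1:Fin 3)).card ≤ 1 := by
      have := hM'.2 1; rw [hcap1] at this
      exact le_trans (le_of_eq (congrArg Finset.card (filter_deceq _ _))) this
    have hz1 : (([0,1,2] : List (Fin 3)).idxOf 0) = 0 := by decide
    have hz2 : (([1,0] : List (Fin 3)).idxOf 1) = 0 := by decide
    have hlt2 : ∀ y : Fin 3, ([0,1,2] : List (Fin 3)).idxOf y <
        ([0,1,2] : List (Fin 3)).idxOf 2 → y = 0 ∨ y = 1 := by decide
    have hgt0 : ∀ y : Fin 3, y ≠ 0 → ([0,1,2] : List (Fin 3)).idxOf 0 <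
        ([0,1,2] : List (Fin 3)).idxOf y := by decide
    have hgt1 : ∀ y : Fin 3, y ≠ 1 → ([1,0] : List (Fin 3)).idxOf 1 <
        ([1,0] : List (Fin 3)).idxOf y := by decide
    -- improvers are a_i with i ≠ 0, matched to house 0 or 1 in M'
    have himp : ∀ a, Better (Inst.pref a) (M' a) (M a) →
        (M' a = some 0 ∨ M' a = some 1) ∧ ∃ i : Fin (n+2), i ≠ 0 ∧ a = Sum.inl i := by
      rintro (i | u) hb
      · by_cases hi : i = 0
        · subst hi
          rw [hM0, hprefl] at hb
          cases h : M' (Sum.inl 0) with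
          | none => rw [h] at hb; exact hb.elim
          | some x =>
            rw [h] at hb
            obtain ⟨_, h2⟩ := hb
            rw [beq_congr _ (instDecidableEqFin 3)] at h2
            rw [hz1] at h2
            exact absurd h2 (Nat.not_lt_zero _)
        · rw [hMi i hi, hprefl] at hb
          cases h : M' (Sum.inl i) with
          | none => rw [h] at hb; exact hb.elim
          | some x =>
            rw [h] at hb
            obtain ⟨_, h2⟩ := hb
            refine ⟨?_, i, hi, rfl⟩
            rw [beq_congr _ (instDecidableEqFin 3)] at h2
            rcases hlt2 x h2 with rfl | rfl
            · exact Or.inl rfl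
            · exact Or.inr rfl
      · rw [hMb u, hprefr u] at hb
        cases h : M' (Sum.inr u) with
        | none => rw [h] at hb; exact hb.elim
        | some x =>
          rw [h] at hb
          obtain ⟨_, h2⟩ := hb
          rw [beq_congr _ (instDecidableEqFin 3)] at h2
          rw [hz2] at h2
          exact absurd h2 (Nat.not_lt_zero _)
    -- regressers
    have hRa0 : M' (Sum.inl 0) ≠ some 0 →
        Better (Inst.pref (Sum.inl 0)) (M (Sum.inl 0)) (M' (Sum.inl 0)) := by
      intro hne
      rw [hM0, hprefl]
      cases h : M' (Sum.inl 0) with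
      | none => exact hmem3 0
      | some x =>
        have hx : x ≠ 0 := by rintro rfl; exact hne h
        refine ⟨hmem3 0, ?_⟩
        rw [beq_congr _ (instDecidableEqFin 3)]
        exact hgt0 x hx
    have hRb : M' (Sum.inr ()) ≠ some 1 →
        Better (Inst.pref (Sum.inr ())) (M (Sum.inr ())) (M' (Sum.inr ())) := by
      intro hne
      rw [hMb (), hprefr ()]
      cases h : M' (Sum.inr ()) with
      | none => show (1:Fin 3) ∈ [1,0]; decide
      | some x =>
        have hx : x ≠ 1 := by rintro rfl; exact hne h
        refine ⟨by decide, ?_⟩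
        rw [beq_congr _ (instDecidableEqFin 3)]
        exact hgt1 x hx
    have key : (univ.filter fun a => Better (Inst.pref a) (M' a) (M a)).card ≤
               (univ.filter fun a => Better (Inst.pref a) (M a) (M' a)).card := by
      by_cases h0 : M' (Sum.inl 0) = some 0 <;> by_cases h1 : M' (Sum.inr ()) = some 1
      · -- both have first choice: no improvers
        have huniq0 : ∀ x, M' x = some 0 → x = Sum.inl 0 := fun x hx =>
          Finset.card_le_one.mp hcard0 x (mem_filter.mpr ⟨mem_univ _, hx⟩)
            (Sum.inl 0) (mem_filter.mpr ⟨mem_univ _, h0⟩)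
        have huniq1 : ∀ x, M' x = some 1 → x = Sum.inr () := fun x hx =>
          Finset.card_le_one.mp hcard1 x (mem_filter.mpr ⟨mem_univ _, hx⟩)
            (Sum.inr ()) (mem_filter.mpr ⟨mem_univ _, h1⟩)
        have hempty : (univ.filter fun a => Better (Inst.pref a) (M' a) (M a)) = ∅ := by
          rw [Finset.eq_empty_iff_forall_notMem]
          intro a ha
          rw [mem_filter] at ha
          obtain ⟨hT, i, hi, rfl⟩ := himp a ha.2
          rcases hT with hT | hT
          · have h' := huniq0 _ hT
            injection h' with h''
            exact hi h''
          · exact absurd (huniq1 _ hT) (by simp)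
        rw [hempty]
        simp
      · -- a0 has first choice, b doesn't
        have huniq0 : ∀ x, M' x = some 0 → x = Sum.inl 0 := fun x hx =>
          Finset.card_le_one.mp hcard0 x (mem_filter.mpr ⟨mem_univ _, hx⟩)
            (Sum.inl 0) (mem_filter.mpr ⟨mem_univ _, h0⟩)
        have hsub : (univ.filter fun a => Better (Inst.pref a) (M' a) (M a)) ⊆
            univ.filter fun a => M' a = some (1:Fin 3) := by
          intro a ha
          rw [mem_filter] at ha ⊢
          obtain ⟨hT, i, hi, rfl⟩ := himp a ha.2
          rcases hT with hT | hT
          · exact absurd (huniq0 _ hT) (by simp [hi] : Sum.inl i ≠ Sum.inl 0)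
          · exact ⟨mem_univ _, hT⟩
        calc (univ.filter fun a => Better (Inst.pref a) (M' a) (M a)).card
            ≤ (univ.filter fun a => M' a = some (1:Fin 3)).card := card_le_card hsub
          _ ≤ 1 := hcard1
          _ ≤ _ := by
              have hmemR : Sum.inr () ∈
                  univ.filter (fun a => Better (Inst.pref a) (M a) (M' a)) :=
                mem_filter.mpr ⟨mem_univ _, hRb h1⟩
              exact Finset.card_pos.mpr ⟨_, hmemR⟩
      · -- b has first choice, a0 doesn't
        have huniq1 : ∀ x, M' x = some 1 → x = Sum.inr () := fun x hx =>
          Finset.card_le_one.mp hcard1 x (mem_filter.mpr ⟨mem_univ _, hx⟩)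
            (Sum.inr ()) (mem_filter.mpr ⟨mem_univ _, h1⟩)
        have hsub : (univ.filter fun a => Better (Inst.pref a) (M' a) (M a)) ⊆
            univ.filter fun a => M' a = some (0:Fin 3) := by
          intro a ha
          rw [mem_filter] at ha ⊢
          obtain ⟨hT, i, hi, rfl⟩ := himp a ha.2
          rcases hT with hT | hT
          · exact ⟨mem_univ _, hT⟩
          · exact absurd (huniq1 _ hT) (by simp)
        calc (univ.filter fun a => Better (Inst.pref a) (M' a) (M a)).card
            ≤ (univ.filter fun a => M' a = some (0:Fin 3)).card := card_le_card hsub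
          _ ≤ 1 := hcard0
          _ ≤ _ := by
              have hmemR : Sum.inl 0 ∈
                  univ.filter (fun a => Better (Inst.pref a) (M a) (M' a)) :=
                mem_filter.mpr ⟨mem_univ _, hRa0 h0⟩
              exact Finset.card_pos.mpr ⟨_, hmemR⟩
      · -- neither has first choice
        have hsub : (univ.filter fun a => Better (Inst.pref a) (M' a) (M a)) ⊆
            (univ.filter fun a => M' a = some (0:Fin 3)) ∪
            (univ.filter fun a => M' a = some (1:Fin 3)) := by
          intro a ha
          rw [mem_filter] at ha
          obtain ⟨hT, i, hi, rfl⟩ := himp a ha.2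
          rw [mem_union, mem_filter, mem_filter]
          rcases hT with hT | hT
          · exact Or.inl ⟨mem_univ _, hT⟩
          · exact Or.inr ⟨mem_univ _, hT⟩
        have h2le : ({Sum.inl 0, Sum.inr ()} : Finset (Fin (n+2) ⊕ Unit)) ⊆
            univ.filter fun a => Better (Inst.pref a) (M a) (M' a) := by
          intro a ha
          rw [mem_insert, mem_singleton] at ha
          rw [mem_filter]
          rcases ha with rfl | rfl
          · exact ⟨mem_univ _, hRa0 h0⟩
          · exact ⟨mem_univ _, hRb h1⟩
        calc (univ.filter fun a => Better (Inst.pref a) (M' a) (M a)).card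
            ≤ ((univ.filter fun a => M' a = some (0:Fin 3)) ∪
               (univ.filter fun a => M' a = some (1:Fin 3))).card := card_le_card hsub
          _ ≤ (univ.filter fun a => M' a = some (0:Fin 3)).card +
              (univ.filter fun a => M' a = some (1:Fin 3)).card := card_union_le _ _
          _ ≤ 2 := by omega
          _ = ({Sum.inl 0, Sum.inr ()} : Finset (Fin (n+2) ⊕ Unit)).card := by
              rw [card_insert_of_notMem (by simp), card_singleton]
          _ ≤ _ := card_le_card h2le
    exact (not_lt.mpr key) hdom
end
end
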